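/- For every d ∈ (0, 1/2), the second-order differenced autocovariances γ_Z(h) = −|h+2|^{2d+1} + 4|h+1|^{2d+1} − 6|h|^{2d+1} + 4|h−1|^{2d+1} − |h−2|^{2d+1}, h ∈ ℤ, satisfy Σ_{h∈ℤ} γ_Z(h)² < ∞. -/
import Mathlib


open Real

/-- The (unnormalized) autocovariance of the differenced fractional noise with
parameter `d`: the fourth-order central difference of `h ↦ |h|^{2d+1}`. -/
noncomputable def diffFracAutocov (d : ℝ) (h : ℤ) : ℝ :=
  -|(h : ℝ) + 2| ^ (2 * d + 1) + 4 * |(h : ℝ) + 1| ^ (2 * d + 1)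
    - 6 * |(h : ℝ)| ^ (2 * d + 1) + 4 * |(h : ℝ) - 1| ^ (2 * d + 1)
    - |(h : ℝ) - 2| ^ (2 * d + 1)

open Set

lemma second_diff_eq {f f' : ℝ → ℝ} {a : ℝ}
    (hf : ∀ t ∈ Icc (a - 1) (a + 1), HasDerivAt f (f' t) t) :
    ∃ c₁ ∈ Ioo a (a + 1), ∃ c₂ ∈ Ioo (a - 1) a,
      f (a + 1) - 2 * f a + f (a - 1) = f' c₁ - f' c₂ := by
  have h1 : a < a + 1 := by linarith
  have h2 : a - 1 < a := by linarith
  obtain ⟨c₁, hc₁, he₁⟩ := exists_hasDerivAt_eq_slope f f' h1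
    (fun t ht => (hf t ⟨by linarith [ht.1], ht.2⟩).continuousAt.continuousWithinAt)
    (fun t ht => hf t ⟨by linarith [ht.1], ht.2.le⟩)
  obtain ⟨c₂, hc₂, he₂⟩ := exists_hasDerivAt_eq_slope f f' h2
    (fun t ht => (hf t ⟨ht.1, by linarith [ht.2]⟩).continuousAt.continuousWithinAt)
    (fun t ht => hf t ⟨ht.1.le, by linarith [ht.2]⟩)
  refine ⟨c₁, hc₁, c₂, hc₂, ?_⟩
  rw [he₁, he₂, show a + 1 - a = 1 by ring, show a - (a - 1) = 1 by ring]
  ring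

/-- Key quantitative bound: the fourth central difference of `t ^ p` for `1 < p < 2`
is bounded by `8 * (x-2)^(p-3)` for `x ≥ 3`. -/
lemma fourth_diff_bound {p x : ℝ} (hp1 : 1 < p) (hp2 : p < 2) (hx : 3 ≤ x) :
    |(x+2) ^ p - 4 * (x+1) ^ p + 6 * x ^ p - 4 * (x-1) ^ p + (x-2) ^ p|
      ≤ 8 * (x - 2) ^ (p - 3) := by
  set g0 : ℝ → ℝ := fun t => t ^ p with hg0
  set g1 : ℝ → ℝ := fun t => p * t ^ (p - 1) with hg1
  set g2 : ℝ → ℝ := fun t => p * (p - 1) * t ^ (p - 2) with hg2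
  set g3 : ℝ → ℝ := fun t => p * (p - 1) * (p - 2) * t ^ (p - 3) with hg3
  have hder0 : ∀ t : ℝ, 0 < t → HasDerivAt g0 (g1 t) t := fun t ht =>
    Real.hasDerivAt_rpow_const (Or.inl ht.ne')
  have hder1 : ∀ t : ℝ, 0 < t → HasDerivAt g1 (g2 t) t := by
    intro t ht
    have := (Real.hasDerivAt_rpow_const (p := p - 1) (Or.inl ht.ne')).const_mul p
    simpa [hg1, hg2, mul_assoc, show p - 1 - 1 = p - 2 by ring] using this
  have hder2 : ∀ t : ℝ, 0 < t → HasDerivAt g2 (g3 t) t := by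
    intro t ht
    have := (Real.hasDerivAt_rpow_const (p := p - 2) (Or.inl ht.ne')).const_mul (p * (p - 1))
    simpa [hg2, hg3, mul_assoc, show p - 2 - 1 = p - 3 by ring] using this
  set B : ℝ := (x - 2) ^ (p - 3) with hB
  have hB0 : 0 ≤ B := Real.rpow_nonneg (by linarith) _
  have hg3bd : ∀ t ∈ Ioo (x - 2) (x + 2), ‖g3 t‖ ≤ 2 * B := by
    intro t ht
    have ht0 : 0 < t := by have := ht.1; linarith
    have habs : |g3 t| = p * (p - 1) * (2 - p) * t ^ (p - 3) := by
      rw [hg3, abs_mul, abs_of_nonneg (Real.rpow_nonneg ht0.le _), abs_mul]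
      rw [abs_of_nonneg (by nlinarith : (0:ℝ) ≤ p * (p-1)),
        abs_of_neg (by linarith : p - 2 < 0)]
      ring_nf
    rw [Real.norm_eq_abs, habs]
    have hcoef : p * (p - 1) * (2 - p) ≤ 2 := by
      nlinarith [sq_nonneg (2*p - 3), sq_nonneg (p-1)]
    have htB : t ^ (p - 3) ≤ B :=
      Real.rpow_le_rpow_of_nonpos (by linarith) ht.1.le (by linarith)
    have h1 : p * (p - 1) * (2 - p) * t ^ (p - 3) ≤ 2 * t ^ (p - 3) := by
      have := Real.rpow_nonneg ht0.le (p - 3)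
      nlinarith
    have h2 : 2 * t ^ (p - 3) ≤ 2 * B := by linarith
    linarith
  have hlip : ∀ s ∈ Ioo (x - 2) (x + 2), ∀ t ∈ Ioo (x - 2) (x + 2),
      |g2 s - g2 t| ≤ 2 * B * |s - t| := by
    intro s hs t ht
    have := (convex_Ioo (x - 2) (x + 2)).norm_image_sub_le_of_norm_hasDerivWithin_le
      (f := g2) (f' := g3) (C := 2 * B)
      (fun u hu => (hder2 u (by have := hu.1; linarith)).hasDerivWithinAt) hg3bd ht hs
    simpa [Real.norm_eq_abs] using this
  have hpsi' : ∀ c ∈ Ioo (x - 1) (x + 1), |g1 (c+1) - 2 * g1 c + g1 (c-1)| ≤ 4 * B := by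
    intro c hc
    obtain ⟨e₁, he₁, e₂, he₂, heq⟩ := second_diff_eq (f := g1) (f' := g2) (a := c)
      (fun t ht => hder1 t (by have := ht.1; have := hc.1; linarith))
    rw [heq]
    have he₁m : e₁ ∈ Ioo (x - 2) (x + 2) :=
      ⟨by have := he₁.1; have := hc.1; linarith, by have := he₁.2; have := hc.2; linarith⟩
    have he₂m : e₂ ∈ Ioo (x - 2) (x + 2) :=
      ⟨by have := he₂.1; have := hc.1; linarith, by have := he₂.2; have := hc.2; linarith⟩
    have hd : |e₁ - e₂| ≤ 2 := by
      rw [abs_le]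
      constructor <;>
        · have := he₁.1; have := he₁.2; have := he₂.1; have := he₂.2; linarith
    calc |g2 e₁ - g2 e₂| ≤ 2 * B * |e₁ - e₂| := hlip e₁ he₁m e₂ he₂m
      _ ≤ 2 * B * 2 := by nlinarith
      _ = 4 * B := by ring
  set ψ : ℝ → ℝ := fun u => g0 (u+1) - 2 * g0 u + g0 (u-1) with hψ
  set ψ' : ℝ → ℝ := fun u => g1 (u+1) - 2 * g1 u + g1 (u-1) with hψ'
  have hderψ : ∀ u ∈ Icc (x - 1) (x + 1), HasDerivAt ψ (ψ' u) u := by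
    intro u hu
    have h1 : HasDerivAt (fun v : ℝ => g0 (v + 1)) (g1 (u + 1)) u :=
      HasDerivAt.comp_add_const u 1 (hder0 (u + 1) (by have := hu.1; linarith))
    have h2 : HasDerivAt g0 (g1 u) u := hder0 u (by have := hu.1; linarith)
    have h3 : HasDerivAt (fun v : ℝ => g0 (v - 1)) (g1 (u - 1)) u :=
      HasDerivAt.comp_sub_const u 1 (hder0 (u - 1) (by have := hu.1; linarith))
    exact (h1.sub (h2.const_mul 2)).add h3
  obtain ⟨c₁, hc₁, c₂, hc₂, heq⟩ := second_diff_eq (f := ψ) (f' := ψ') hderψ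
  have hmain : |ψ (x+1) - 2 * ψ x + ψ (x-1)| ≤ 8 * B := by
    rw [heq]
    have b1 := hpsi' c₁ ⟨by have := hc₁.1; linarith, hc₁.2⟩
    have b2 := hpsi' c₂ ⟨hc₂.1, by have := hc₂.2; linarith⟩
    calc |ψ' c₁ - ψ' c₂| ≤ |ψ' c₁| + |ψ' c₂| := abs_sub _ _
      _ ≤ 4 * B + 4 * B := add_le_add b1 b2
      _ = 8 * B := by ring
  have hexp : ψ (x+1) - 2 * ψ x + ψ (x-1)
      = (x+2) ^ p - 4 * (x+1) ^ p + 6 * x ^ p - 4 * (x-1) ^ p + (x-2) ^ p := by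
    simp only [hψ, hg0]
    rw [show x + 1 + 1 = x + 2 by ring, show x + 1 - 1 = x by ring,
      show x - 1 + 1 = x by ring, show x - 1 - 1 = x - 2 by ring]
    ring
  rw [← hexp]
  exact hmain

lemma gamma_bound (d : ℝ) (hd0 : 0 < d) (hd1 : d < 1/2) (n : ℕ) :
    |diffFracAutocov d ((n : ℤ) + 3)| ≤ 8 * ((n : ℝ) + 1) ^ (2 * d - 2) := by
  have hn : (0:ℝ) ≤ (n : ℝ) := Nat.cast_nonneg n
  have hb := fourth_diff_bound (p := 2*d+1) (x := (n:ℝ) + 3)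
    (by linarith) (by linarith) (by linarith)
  unfold diffFracAutocov
  push_cast
  rw [abs_of_nonneg (by linarith : (0:ℝ) ≤ (n:ℝ) + 3 + 2),
    abs_of_nonneg (by linarith : (0:ℝ) ≤ (n:ℝ) + 3 + 1),
    abs_of_nonneg (by linarith : (0:ℝ) ≤ (n:ℝ) + 3),
    abs_of_nonneg (by linarith : (0:ℝ) ≤ (n:ℝ) + 3 - 1),
    abs_of_nonneg (by linarith : (0:ℝ) ≤ (n:ℝ) + 3 - 2)]
  rw [show (n:ℝ) + 3 - 2 = (n:ℝ) + 1 by ring] at hb ⊢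
  rw [show 2*d+1-3 = 2*d-2 by ring] at hb
  have hrw : -((n:ℝ) + 3 + 2) ^ (2*d+1) + 4 * ((n:ℝ) + 3 + 1) ^ (2*d+1)
      - 6 * ((n:ℝ) + 3) ^ (2*d+1) + 4 * ((n:ℝ) + 3 - 1) ^ (2*d+1)
      - ((n:ℝ) + 1) ^ (2*d+1)
      = -(((n:ℝ)+3+2) ^ (2*d+1) - 4 * ((n:ℝ)+3+1) ^ (2*d+1) + 6 * ((n:ℝ)+3) ^ (2*d+1)
        - 4 * ((n:ℝ)+3-1) ^ (2*d+1) + ((n:ℝ)+1) ^ (2*d+1)) := by ring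
  rw [hrw, abs_neg]
  exact hb


/-- for every `d ∈ (0,1/2)`, the second-order differenced
autocovariances are square summable: `∑_{h∈ℤ} γ_Z(h)² < ∞`. -/
theorem statement19 (d : ℝ) (hd : d ∈ Set.Ioo (0 : ℝ) (1 / 2)) :
    Summable (fun h : ℤ => diffFracAutocov d h ^ 2) := by
  obtain ⟨hd0, hd1⟩ := hd
  have hsym : ∀ h : ℤ, diffFracAutocov d (-h) = diffFracAutocov d h := by
    intro h
    unfold diffFracAutocov
    push_cast
    rw [show -(h:ℝ) + 2 = -((h:ℝ) - 2) by ring, show -(h:ℝ) + 1 = -((h:ℝ) - 1) by ring,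
      show -(h:ℝ) - 1 = -((h:ℝ) + 1) by ring, show -(h:ℝ) - 2 = -((h:ℝ) + 2) by ring]
    simp only [abs_neg]
    ring
  have key : Summable (fun n : ℕ => diffFracAutocov d (n : ℤ) ^ 2) := by
    rw [← summable_nat_add_iff 3]
    have h1 : Summable (fun n : ℕ => ((n:ℝ)) ^ (-2:ℝ)) :=
      Real.summable_nat_rpow.2 (by norm_num)
    have h2 : Summable (fun n : ℕ => ((n:ℝ) + 1) ^ (-2:ℝ)) := by
      have := (summable_nat_add_iff 1).2 h1
      simpa using this
    apply Summable.of_nonneg_of_le (fun n => sq_nonneg _) ?_ (h2.mul_left 64)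
    intro n
    have hb := gamma_bound d hd0 hd1 n
    have hx1 : (1:ℝ) ≤ (n:ℝ) + 1 := by have := Nat.cast_nonneg (α := ℝ) n; linarith
    have hcast : ((n + 3 : ℕ) : ℤ) = (n : ℤ) + 3 := by push_cast; ring
    have hsq : diffFracAutocov d ((n:ℤ) + 3) ^ 2 ≤ (8 * ((n:ℝ) + 1) ^ (2*d-2)) ^ 2 := by
      rw [← sq_abs]
      exact pow_le_pow_left₀ (abs_nonneg _) hb 2
    have hrpow : (((n:ℝ) + 1) ^ (2*d-2)) ^ 2 ≤ ((n:ℝ) + 1) ^ (-2:ℝ) := by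
      rw [sq, ← Real.rpow_add (by linarith : (0:ℝ) < (n:ℝ)+1)]
      exact Real.rpow_le_rpow_of_exponent_le hx1 (by linarith)
    calc diffFracAutocov d ((n + 3 : ℕ) : ℤ) ^ 2
        = diffFracAutocov d ((n:ℤ) + 3) ^ 2 := by rw [hcast]
      _ ≤ (8 * ((n:ℝ) + 1) ^ (2*d-2)) ^ 2 := hsq
      _ = 64 * (((n:ℝ) + 1) ^ (2*d-2)) ^ 2 := by ring
      _ ≤ 64 * ((n:ℝ) + 1) ^ (-2:ℝ) := by linarith
  rw [summable_int_iff_summable_nat_and_neg]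
  exact ⟨key, by simpa [hsym] using key⟩
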